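/- Let G be a graph without a perfect matching (i.e., without a matching of size ⌊|V(G)|/2⌋). Let v be a vertex isolated by some maximum matching, and let B(v) be the set of vertices w ≠ v such that some maximum matching of G isolates both v and w. If B(v) is nonempty, then |N(B(v))| < |B(v)|, where N(S) denotes the set of vertices outside S adjacent to some vertex of S. -/

import Mathlib

open Finset Set

/-- `M` is a maximum matching of `G`: a matching covering as many vertices as possible. -/
def SimpleGraph.IsMaximumMatching {V : Type*} [Fintype V] (G : SimpleGraph V)
    (M : G.Subgraph) : Prop :=
  M.IsMatching ∧ ∀ M' : G.Subgraph, M'.IsMatching → M'.verts.ncard ≤ M.verts.ncard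

section Aux

variable {V : Type*} [Fintype V] {G : SimpleGraph V}

lemma aux_max_of_card_eq {M N : G.Subgraph} (hM : G.IsMaximumMatching M)
    (hN : N.IsMatching) (h : N.verts.ncard = M.verts.ncard) : G.IsMaximumMatching N :=
  ⟨hN, fun K hK => (hM.2 K hK).trans h.symm.le⟩

lemma aux_no_aug {M : G.Subgraph} (hM : G.IsMaximumMatching M) {a b : V}
    (hab : G.Adj a b) (ha : a ∉ M.verts) (hb : b ∉ M.verts) : False := by
  have hd : Disjoint M.support (G.subgraphOfAdj hab).support := by
    rw [SimpleGraph.support_subgraphOfAdj]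
    rw [Set.disjoint_right]
    rintro x (rfl | rfl) hx <;>
      exact (by assumption : _ ∉ M.verts) (M.support_subset_verts hx)
  have hmatch : (M ⊔ G.subgraphOfAdj hab).IsMatching :=
    hM.1.sup (SimpleGraph.Subgraph.IsMatching.subgraphOfAdj hab) hd
  have hverts : (M ⊔ G.subgraphOfAdj hab).verts = M.verts ∪ {a, b} := rfl
  have hle := hM.2 _ hmatch
  have hd2 : Disjoint M.verts ({a, b} : Set V) := by
    rw [Set.disjoint_right]; rintro x (rfl | rfl) hx
    · exact ha hx
    · exact hb hx
  rw [hverts, Set.ncard_union_eq hd2 (Set.toFinite _) (Set.toFinite _),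
    Set.ncard_pair hab.ne] at hle
  omega

lemma aux_swap {N : G.Subgraph} (hN : N.IsMatching) {a b c : V}
    (hab : N.Adj a b) (hc : c ∉ N.verts) (hac : G.Adj a c) :
    ∃ N' : G.Subgraph, N'.IsMatching ∧ N'.verts = insert c (N.verts \ {b}) ∧
      (∀ x y, N'.Adj x y ↔ (s(x, y) = s(a, c) ∨ (N.Adj x y ∧ s(x, y) ≠ s(a, b)))) := by
  have uniq : ∀ {p q r : V}, N.Adj p q → N.Adj p r → q = r :=
    fun h1 h2 => (hN h1.fst_mem).unique h1 h2
  have haN : a ∈ N.verts := hab.fst_mem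
  have hbN : b ∈ N.verts := hab.snd_mem
  have hanb : a ≠ b := hab.ne
  have hca : c ≠ a := fun h => hc (h ▸ haN)
  have hcb : c ≠ b := fun h => hc (h ▸ hbN)
  refine ⟨N.deleteVerts {a, b} ⊔ G.subgraphOfAdj hac, ?_, ?_, ?_⟩
  · refine SimpleGraph.Subgraph.IsMatching.sup ?_
      (SimpleGraph.Subgraph.IsMatching.subgraphOfAdj hac) ?_
    · intro y hy
      rw [SimpleGraph.Subgraph.deleteVerts_verts] at hy
      obtain ⟨hyv, hyab⟩ := hy
      simp only [Set.mem_insert_iff, Set.mem_singleton_iff, not_or] at hyab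
      obtain ⟨z, hz, hzuniq⟩ := hN hyv
      have hza : z ≠ a := by
        rintro rfl
        exact hyab.2 (uniq hab hz.symm).symm
      have hzb : z ≠ b := by
        rintro rfl
        exact hyab.1 (uniq hab.symm hz.symm).symm
      refine ⟨z, ?_, fun z' hz' => ?_⟩
      · show (N.deleteVerts {a, b}).Adj y z
        rw [SimpleGraph.Subgraph.deleteVerts_adj]
        simp only [Set.mem_insert_iff, Set.mem_singleton_iff, not_or]
        exact ⟨hyv, ⟨hyab.1, hyab.2⟩, hz.snd_mem, ⟨hza, hzb⟩, hz⟩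
      · have hz'' : (N.deleteVerts {a, b}).Adj y z' := hz'
        rw [SimpleGraph.Subgraph.deleteVerts_adj] at hz''
        exact hzuniq z' hz''.2.2.2.2
    · rw [SimpleGraph.support_subgraphOfAdj, Set.disjoint_right]
      rintro x (rfl | rfl) hx <;>
        have hx' := (SimpleGraph.Subgraph.support_subset_verts _) hx <;>
        rw [SimpleGraph.Subgraph.deleteVerts_verts] at hx'
      · exact hx'.2 (Set.mem_insert _ _)
      · exact hc hx'.1
  · ext z
    simp only [SimpleGraph.Subgraph.verts_sup, SimpleGraph.Subgraph.deleteVerts_verts,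
      SimpleGraph.subgraphOfAdj_verts, Set.mem_union, Set.mem_diff, Set.mem_insert_iff,
      Set.mem_singleton_iff, not_or]
    constructor
    · rintro (⟨hz, hza, hzb⟩ | rfl | rfl)
      · exact Or.inr ⟨hz, hzb⟩
      · exact Or.inr ⟨haN, hanb⟩
      · exact Or.inl rfl
    · rintro (rfl | ⟨hz, hzb⟩)
      · exact Or.inr (Or.inr rfl)
      · by_cases hza : z = a
        · exact Or.inr (Or.inl hza)
        · exact Or.inl ⟨hz, hza, hzb⟩
  · intro x y
    rw [SimpleGraph.Subgraph.sup_adj, SimpleGraph.Subgraph.deleteVerts_adj,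
      SimpleGraph.subgraphOfAdj_adj]
    simp only [Set.mem_insert_iff, Set.mem_singleton_iff, not_or]
    constructor
    · rintro (⟨hxv, ⟨hxa, hxb⟩, hyv, ⟨hya, hyb⟩, hxy⟩ | h)
      · refine Or.inr ⟨hxy, fun h => ?_⟩
        rw [Sym2.eq_iff] at h
        rcases h with ⟨rfl, rfl⟩ | ⟨rfl, rfl⟩
        · exact hxa rfl
        · exact hxb rfl
      · exact Or.inl h.symm
    · rintro (h | ⟨hxy, hne⟩)
      · exact Or.inr h.symm
      · refine Or.inl ⟨hxy.fst_mem, ⟨?_, ?_⟩, hxy.snd_mem, ⟨?_, ?_⟩, hxy⟩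
        · rintro rfl
          exact hne (by rw [uniq hab hxy])
        · rintro rfl
          rw [uniq hab.symm hxy] at hne
          exact hne (Sym2.eq_swap)
        · rintro rfl
          rw [uniq hab hxy.symm] at hne
          exact hne (Sym2.eq_swap)
        · rintro rfl
          exact hne (by rw [uniq hab.symm hxy.symm])

set_option maxHeartbeats 1000000 in
lemma aux_key (M : G.Subgraph) (hM : G.IsMaximumMatching M) (v : V) (hvM : v ∉ M.verts) :
    ∀ n : ℕ, ∀ M' : G.Subgraph, G.IsMaximumMatching M' → v ∉ M'.verts →
      ∀ w : V, w ≠ v → w ∉ M'.verts → (M'.edgeSet \ M.edgeSet).ncard ≤ n →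
      ∀ u x : V, M.Adj u x → u ≠ w → x ≠ w →
      ∃ N : G.Subgraph, G.IsMaximumMatching N ∧ v ∉ N.verts ∧
        ((w ∉ N.verts ∧ N.Adj u x ∧ ∀ a b, M.Adj a b → M'.Adj a b → N.Adj a b)
          ∨ u ∉ N.verts ∨ x ∉ N.verts) := by
  have uniqM : ∀ {p q r : V}, M.Adj p q → M.Adj p r → q = r :=
    fun h1 h2 => (hM.1 h1.fst_mem).unique h1 h2
  intro n
  induction n with
  | zero =>
    intro M' hM' hvM' w hwv hwM' hcard u x hux huw hxw
    by_cases hwM : w ∈ M.verts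
    case neg => exact ⟨M, hM, hvM, Or.inl ⟨hwM, hux, fun a b h _ => h⟩⟩
    obtain ⟨t, hwt, -⟩ := hM.1 hwM
    have htv : t ≠ v := fun h => hvM (h ▸ hwt.snd_mem)
    have htM' : t ∈ M'.verts := by
      by_contra h
      exact aux_no_aug hM' (M.adj_sub hwt) hwM' h
    obtain ⟨s, hts, -⟩ := hM'.1 htM'
    have hsv : s ≠ v := fun h => hvM' (h ▸ hts.snd_mem)
    have hsw : s ≠ w := fun h => hwM' (h ▸ hts.snd_mem)
    have htsM : ¬ M.Adj t s := fun h => hsw (uniqM hwt.symm h).symm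
    have hts_diff : s(t, s) ∈ M'.edgeSet \ M.edgeSet := ⟨hts, htsM⟩
    have h0 : (M'.edgeSet \ M.edgeSet) = ∅ :=
      (Set.ncard_eq_zero (Set.toFinite _)).mp (Nat.le_zero.mp hcard)
    rw [h0] at hts_diff
    exact absurd hts_diff (Set.notMem_empty _)
  | succ n IH =>
    intro M' hM' hvM' w hwv hwM' hcard u x hux huw hxw
    by_cases hwM : w ∈ M.verts
    case neg => exact ⟨M, hM, hvM, Or.inl ⟨hwM, hux, fun a b h _ => h⟩⟩
    obtain ⟨t, hwt, -⟩ := hM.1 hwM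
    have htv : t ≠ v := fun h => hvM (h ▸ hwt.snd_mem)
    have htM' : t ∈ M'.verts := by
      by_contra h
      exact aux_no_aug hM' (M.adj_sub hwt) hwM' h
    obtain ⟨s, hts, -⟩ := hM'.1 htM'
    have hsv : s ≠ v := fun h => hvM' (h ▸ hts.snd_mem)
    have hsw : s ≠ w := fun h => hwM' (h ▸ hts.snd_mem)
    have htsM : ¬ M.Adj t s := fun h => hsw (uniqM hwt.symm h).symm
    have hts_diff : s(t, s) ∈ M'.edgeSet \ M.edgeSet := ⟨hts, htsM⟩
    obtain ⟨M'', hm'', hverts'', hadj''⟩ := aux_swap hM'.1 hts hwM' (M.adj_sub hwt).symm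
    have hM''card : M''.verts.ncard = M'.verts.ncard := by
      rw [hverts'', Set.ncard_insert_of_notMem (fun h => hwM' h.1) (Set.toFinite _),
        Set.ncard_diff_singleton_add_one hts.snd_mem (Set.toFinite _)]
    have hM''max : G.IsMaximumMatching M'' := aux_max_of_card_eq hM' hm'' hM''card
    have hvM'' : v ∉ M''.verts := by
      rw [hverts'']
      rintro (h | h)
      · exact hwv h.symm
      · exact hvM' h.1
    have hsM'' : s ∉ M''.verts := by
      rw [hverts'']
      rintro (h | h)
      · exact hsw h
      · exact h.2 rfl
    by_cases hsu : s = u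
    · exact ⟨M'', hM''max, hvM'', Or.inr (Or.inl (hsu ▸ hsM''))⟩
    by_cases hsx : s = x
    · exact ⟨M'', hM''max, hvM'', Or.inr (Or.inr (hsx ▸ hsM''))⟩
    have hsub : M''.edgeSet \ M.edgeSet ⊆ (M'.edgeSet \ M.edgeSet) \ {s(t, s)} := by
      intro e he
      induction e using Sym2.ind with
      | _ p q =>
        obtain ⟨he1, he2⟩ := he
        have he1' : M''.Adj p q := he1
        rw [hadj'' p q] at he1'
        rcases he1' with h | ⟨h1, h2⟩
        · exact absurd (show s(p, q) ∈ M.edgeSet from h ▸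
            (SimpleGraph.Subgraph.mem_edgeSet.mpr hwt.symm)) he2
        · exact ⟨⟨h1, he2⟩, h2⟩
    have hcard'' : (M''.edgeSet \ M.edgeSet).ncard ≤ n := by
      have h1 := Set.ncard_le_ncard hsub (Set.toFinite _)
      have h2 := Set.ncard_diff_singleton_of_mem hts_diff
      have h3 : 0 < (M'.edgeSet \ M.edgeSet).ncard :=
        (Set.ncard_pos (Set.toFinite _)).mpr ⟨_, hts_diff⟩
      omega
    obtain ⟨N, hNmax, hvN, hcase⟩ := IH M'' hM''max hvM'' s hsv hsM'' hcard'' u x hux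
      (fun h => hsu h.symm) (fun h => hsx h.symm)
    rcases hcase with ⟨hsN, hNux, hNsub⟩ | h
    · have hwtM'' : M''.Adj w t := by
        rw [hadj'' w t]
        exact Or.inl Sym2.eq_swap
      have hwtN : N.Adj w t := hNsub w t hwt hwtM''
      obtain ⟨N', hN', hvertsN', hadjN'⟩ := aux_swap hNmax.1 hwtN.symm hsN (M'.adj_sub hts)
      have hN'card : N'.verts.ncard = N.verts.ncard := by
        rw [hvertsN', Set.ncard_insert_of_notMem (fun h => hsN h.1) (Set.toFinite _),
          Set.ncard_diff_singleton_add_one hwtN.fst_mem (Set.toFinite _)]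
      refine ⟨N', aux_max_of_card_eq hNmax hN' hN'card, ?_, Or.inl ⟨?_, ?_, ?_⟩⟩
      · rw [hvertsN']
        rintro (h | h)
        · exact hsv h.symm
        · exact hvN h.1
      · rw [hvertsN']
        rintro (h | h)
        · exact hsw h.symm
        · exact h.2 rfl
      · rw [hadjN' u x]
        refine Or.inr ⟨hNux, fun h => ?_⟩
        rw [Sym2.eq_iff] at h
        rcases h with ⟨rfl, rfl⟩ | ⟨rfl, rfl⟩
        · exact hxw rfl
        · exact huw rfl
      · intro a b hab hab'
        have habM'' : M''.Adj a b := by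
          rw [hadj'' a b]
          refine Or.inr ⟨hab', fun h => ?_⟩
          exact htsM (SimpleGraph.Subgraph.mem_edgeSet.mp
            (h ▸ (SimpleGraph.Subgraph.mem_edgeSet.mpr hab)))
        have habN : N.Adj a b := hNsub a b hab habM''
        rw [hadjN' a b]
        refine Or.inr ⟨habN, fun h => ?_⟩
        exact hwM' (SimpleGraph.Subgraph.mem_edgeSet.mp
          (h ▸ (SimpleGraph.Subgraph.mem_edgeSet.mpr hab'))).snd_mem
    · exact ⟨N, hNmax, hvN, Or.inr h⟩

end Aux

theorem stmt_1 {V : Type*} [Fintype V] (G : SimpleGraph V)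
    (hnoPM : ¬∃ M : G.Subgraph, M.IsMatching ∧
      M.verts.ncard = 2 * (Fintype.card V / 2))
    (v : V) (Mv : G.Subgraph) (hMv : G.IsMaximumMatching Mv) (hv : v ∉ Mv.verts)
    (B : Set V)
    (hB : B = {w | w ≠ v ∧ ∃ M : G.Subgraph, G.IsMaximumMatching M ∧
      v ∉ M.verts ∧ w ∉ M.verts})
    (hBne : B.Nonempty) :
    ({u | u ∉ B ∧ ∃ w ∈ B, G.Adj w u} : Set V).ncard < B.ncard := by
  classical
  set NB : Set V := {u | u ∉ B ∧ ∃ w ∈ B, G.Adj w u} with hNB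
  -- Mv misses at least two vertices
  have heven : Even Mv.verts.ncard := by
    haveI : Fintype Mv.verts := Mv.verts.toFinite.fintype
    have := hMv.1.even_card
    rwa [Set.ncard_eq_toFinset_card'] 
  have hle : Mv.verts.ncard ≤ Fintype.card V := by
    have := Set.ncard_le_ncard (Set.subset_univ Mv.verts) Set.finite_univ
    rwa [Set.ncard_univ, Nat.card_eq_fintype_card] at this
  have hne : Mv.verts.ncard ≠ 2 * (Fintype.card V / 2) := fun h => hnoPM ⟨Mv, hMv.1, h⟩
  obtain ⟨k, hk⟩ := heven
  have h2 : 1 < (Set.univ \ Mv.verts : Set V).ncard := by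
    rw [Set.ncard_diff (Set.subset_univ _), Set.ncard_univ, Nat.card_eq_fintype_card]
    omega
  obtain ⟨w0, hw0mem, hw0v⟩ := Set.exists_ne_of_one_lt_ncard h2 v
  have hw0Mv : w0 ∉ Mv.verts := hw0mem.2
  have hw0B : w0 ∈ B := by rw [hB]; exact ⟨hw0v, Mv, hMv, hv, hw0Mv⟩
  -- the key property
  have keyapp : ∀ u ∈ NB, ∃ x, Mv.Adj u x ∧ x ∈ B := by
    rintro u ⟨huB, w, hwB, hadj⟩
    have hwB' := hwB
    rw [hB] at hwB'
    obtain ⟨hwv, M', hM', hvM', hwM'⟩ := hwB'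
    have huv : u ≠ v := by
      rintro rfl
      exact aux_no_aug hM' hadj hwM' hvM'
    have huMv : u ∈ Mv.verts := by
      by_contra h
      exact huB (by rw [hB]; exact ⟨huv, Mv, hMv, hv, h⟩)
    obtain ⟨x, hux, -⟩ := hMv.1 huMv
    have hxv : x ≠ v := fun h => hv (h ▸ hux.snd_mem)
    by_cases hxw : x = w
    · exact ⟨x, hux, hxw ▸ hwB⟩
    have huw : u ≠ w := hadj.ne'
    obtain ⟨N, hNmax, hvN, hcase⟩ := aux_key Mv hMv v hv
      ((M'.edgeSet \ Mv.edgeSet).ncard) M' hM' hvM' w hwv hwM' le_rfl u x hux huw hxw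
    rcases hcase with ⟨hwN, hNux, -⟩ | huN | hxN
    · obtain ⟨N₂, hN₂, hvertsN₂, hadjN₂⟩ := aux_swap hNmax.1 hNux hwN hadj.symm
      have hN₂card : N₂.verts.ncard = N.verts.ncard := by
        rw [hvertsN₂, Set.ncard_insert_of_notMem (fun h => hwN h.1) (Set.toFinite _),
          Set.ncard_diff_singleton_add_one hNux.snd_mem (Set.toFinite _)]
      have hN₂max := aux_max_of_card_eq hNmax hN₂ hN₂card
      have hvN₂ : v ∉ N₂.verts := by
        rw [hvertsN₂]
        rintro (h | h)
        · exact hwv h.symm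
        · exact hvN h.1
      have hxN₂ : x ∉ N₂.verts := by
        rw [hvertsN₂]
        rintro (h | h)
        · exact hxw h
        · exact h.2 rfl
      exact ⟨x, hux, by rw [hB]; exact ⟨hxv, N₂, hN₂max, hvN₂, hxN₂⟩⟩
    · exact absurd (by rw [hB]; exact ⟨huv, N, hNmax, hvN, huN⟩ : u ∈ B) huB
    · exact ⟨x, hux, by rw [hB]; exact ⟨hxv, N, hNmax, hvN, hxN⟩⟩
  -- build the injection
  have hchoice : ∀ u : V, ∃ x : V, u ∈ NB → (Mv.Adj u x ∧ x ∈ B) := by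
    intro u
    by_cases h : u ∈ NB
    · exact (keyapp u h).imp (fun x hx _ => hx)
    · exact ⟨v, fun h' => absurd h' h⟩
  choose f hfspec using hchoice
  have himg : f '' NB ⊆ B \ {w0} := by
    rintro _ ⟨u, hu, rfl⟩
    refine ⟨(hfspec u hu).2, fun h => ?_⟩
    rw [Set.mem_singleton_iff] at h
    exact hw0Mv (h ▸ (hfspec u hu).1.snd_mem)
  have hinj : Set.InjOn f NB := by
    intro u1 h1 u2 h2 heq
    have ha1 : Mv.Adj (f u1) u1 := (hfspec u1 h1).1.symm
    have ha2 : Mv.Adj (f u1) u2 := heq ▸ (hfspec u2 h2).1.symm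
    exact (hMv.1 ha1.fst_mem).unique ha1 ha2
  calc NB.ncard = (f '' NB).ncard := (Set.ncard_image_of_injOn hinj).symm
    _ ≤ (B \ {w0}).ncard := Set.ncard_le_ncard himg (Set.toFinite _)
    _ < B.ncard := Set.ncard_lt_ncard
        ((Set.ssubset_iff_of_subset Set.diff_subset).mpr ⟨w0, hw0B, fun h => h.2 rfl⟩)
        (Set.toFinite _)
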